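/- Let b > 0 and let α : [0,b] → ℝ be differentiable with 0 < α(t) < 1 on [0,b] and |α'(t)| ≤ L. With κ = Γ(α(0))·Γ(1−α(0)), the function g(t) = (1/κ) ∫₀ᵗ (t−s)^{α(0)−1} s^{−α(s)} ds satisfies lim_{t→0⁺} g(t) = 1. -/

import Mathlib

open MeasureTheory Set Filter intervalIntegral
open scoped Topology

lemma beta_integrable {a : ℝ} (h0 : 0 < a) (h1 : a < 1) :
    IntervalIntegrable (fun z : ℝ => (1 - z) ^ (a - 1) * z ^ (-a)) volume 0 1 := by
  have I1 : IntervalIntegrable (fun z : ℝ => (1 - z) ^ (a - 1) * z ^ (-a)) volume 0 (1/2) := by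
    have h := intervalIntegrable_rpow' (a := (0:ℝ)) (b := 1/2) (r := -a) (by linarith)
    have := h.continuousOn_mul (g := fun z : ℝ => (1 - z) ^ (a - 1)) ?_
    · exact this
    · apply ContinuousOn.rpow_const (by fun_prop)
      intro x hx
      rw [uIcc_of_le (by norm_num)] at hx
      left; rcases hx with ⟨h1', h2'⟩; intro h; nlinarith [h2']
  have I2 : IntervalIntegrable (fun z : ℝ => (1 - z) ^ (a - 1) * z ^ (-a)) volume (1/2) 1 := by
    have h := intervalIntegrable_rpow' (a := (0:ℝ)) (b := 1/2) (r := a - 1) (by linarith)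
    have h' := h.comp_sub_left 1
    norm_num at h'
    have := h'.mul_continuousOn (g := fun z : ℝ => z ^ (-a)) ?_
    · exact this.symm
    · apply ContinuousOn.rpow_const (by fun_prop)
      intro x hx
      rw [uIcc_comm, uIcc_of_le (by norm_num)] at hx
      left; rcases hx with ⟨h1', h2'⟩; intro h; nlinarith
  exact I1.trans I2

lemma beta_value {a : ℝ} (h0 : 0 < a) (h1 : a < 1) :
    ∫ z in (0:ℝ)..1, (1 - z) ^ (a - 1) * z ^ (-a) = Real.Gamma a * Real.Gamma (1 - a) := by
  have hs : 0 < Complex.re ((1 - a : ℝ) : ℂ) := by simpa using by linarith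
  have ht : 0 < Complex.re ((a : ℝ) : ℂ) := by simpa using h0
  have key := Complex.Gamma_mul_Gamma_eq_betaIntegral hs ht
  have hsum : ((1 - a : ℝ) : ℂ) + ((a : ℝ) : ℂ) = 1 := by push_cast; ring
  rw [hsum, Complex.Gamma_one, one_mul] at key
  have hcongr : Complex.betaIntegral ((1 - a : ℝ) : ℂ) ((a : ℝ) : ℂ)
      = ((∫ z in (0:ℝ)..1, (1 - z) ^ (a - 1) * z ^ (-a) : ℝ) : ℂ) := by
    rw [Complex.betaIntegral, ← intervalIntegral.integral_ofReal]
    apply intervalIntegral.integral_congr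
    intro x hx
    rw [uIcc_of_le (by norm_num)] at hx
    rcases hx with ⟨hx0, hx1⟩
    simp only [Complex.ofReal_mul, Complex.ofReal_cpow hx0 (-a),
      Complex.ofReal_cpow (show (0:ℝ) ≤ 1 - x by linarith) (a - 1)]
    push_cast
    ring_nf
  rw [hcongr] at key
  have : ((Real.Gamma (1-a) * Real.Gamma a : ℝ) : ℂ)
      = ((∫ z in (0:ℝ)..1, (1 - z) ^ (a - 1) * z ^ (-a) : ℝ) : ℂ) := by
    rw [← key]; push_cast [← Complex.Gamma_ofReal]; ring_nf
  have := Complex.ofReal_inj.mp this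
  rw [← this]; ring

lemma abs_exp_sub_one_le' (x : ℝ) : |Real.exp x - 1| ≤ Real.exp |x| - 1 := by
  rcases le_or_gt 0 x with h | h
  · rw [abs_of_nonneg h, abs_of_nonneg (by nlinarith [Real.exp_pos x, Real.add_one_le_exp x])]
  · rw [abs_of_neg h, abs_of_nonpos (by nlinarith [Real.exp_lt_one_iff.mpr h] : Real.exp x - 1 ≤ 0)]
    have h1 : Real.exp (-x) * Real.exp x = 1 := by
      rw [← Real.exp_add]; simp
    nlinarith [Real.exp_pos x, Real.exp_pos (-x), sq_nonneg (Real.exp x - 1)]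

lemma point_eq {a : ℝ} (ha0 : 0 < a) (ha1 : a < 1) (α : ℝ → ℝ) (hA : α 0 = a)
    {t : ℝ} (ht : 0 < t) :
    ∀ z ∈ Icc (0:ℝ) 1, t * ((t - t*z) ^ (a-1) * (t*z) ^ (-(α (t*z)))) =
      (1-z) ^ (a-1) * z ^ (-a) * (t*z) ^ (a - α (t*z)) := by
  intro z hz
  rcases eq_or_lt_of_le hz.1 with h0 | h0
  · have hz0 : z = 0 := h0.symm
    subst hz0
    rw [mul_zero, Real.zero_rpow (by simp [hA]; exact ha0.ne' : -(α 0) ≠ 0),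
      Real.zero_rpow (by exact neg_ne_zero.mpr ha0.ne' : -a ≠ 0)]
    ring
  rcases eq_or_lt_of_le hz.2 with h1 | h1
  · rw [h1]
    rw [show t - t*1 = 0 by ring, show (1:ℝ) - 1 = 0 by ring,
      Real.zero_rpow (by intro h; exact absurd (by linarith : a = 1) (by intro hh; linarith))]
    ring
  · have htz : 0 < t * z := mul_pos ht h0
    have h1z : (0:ℝ) ≤ 1 - z := by linarith
    rw [show t - t*z = t * (1-z) by ring,
      Real.mul_rpow ht.le h1z,
      show -(α (t*z)) = (-a) + (a - α (t*z)) by ring,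
      Real.rpow_add htz,
      Real.mul_rpow ht.le h0.le]
    have h3 : t * t^(a-1) * t^(-a) = 1 := by
      rw [mul_assoc, ← Real.rpow_add ht, show a - 1 + -a = -1 by ring, Real.rpow_neg_one]
      exact mul_inv_cancel₀ ht.ne'
    linear_combination ((1 - z) ^ (a - 1) * z ^ (-a) * (t * z) ^ (a - α (t * z))) * h3

/-- with `κ = Γ(α 0) Γ(1 - α 0)`, the function
`g t = (1/κ) ∫₀ᵗ (t-s)^(α 0 - 1) s^(-α s) ds` satisfies `lim_{t→0⁺} g t = 1`. -/
theorem stmt1 (b L : ℝ) (hb : 0 < b) (α α' : ℝ → ℝ)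
    (hα_diff : ∀ t ∈ Icc (0:ℝ) b, HasDerivAt α (α' t) t)
    (hα_range : ∀ t ∈ Icc (0:ℝ) b, 0 < α t ∧ α t < 1)
    (hα_lip : ∀ t ∈ Icc (0:ℝ) b, |α' t| ≤ L)
    (g : ℝ → ℝ)
    (hg : ∀ t : ℝ, g t = (1 / (Real.Gamma (α 0) * Real.Gamma (1 - α 0))) *
      ∫ s in (0:ℝ)..t, (t - s) ^ (α 0 - 1) * s ^ (-(α s))) :
    Tendsto g (nhdsWithin 0 (Ioi 0)) (nhds 1) := by
  set a := α 0 with haa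
  have h0b : (0:ℝ) ∈ Icc 0 b := ⟨le_refl _, hb.le⟩
  obtain ⟨ha0, ha1⟩ := hα_range 0 h0b
  have hL : 0 ≤ L := (abs_nonneg _).trans (hα_lip 0 h0b)
  have hκ : 0 < Real.Gamma a * Real.Gamma (1-a) :=
    mul_pos (Real.Gamma_pos_of_pos ha0) (Real.Gamma_pos_of_pos (by linarith))
  set κ := Real.Gamma a * Real.Gamma (1-a) with hκdef
  have hαc : ContinuousOn α (Icc 0 b) :=
    fun x hx => ((hα_diff x hx).continuousAt).continuousWithinAt
  have hlip : ∀ x ∈ Icc (0:ℝ) b, |α x - a| ≤ L * x := by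
    intro x hx
    have h := (convex_Icc (0:ℝ) b).norm_image_sub_le_of_norm_hasDerivWithin_le
      (fun y hy => (hα_diff y hy).hasDerivWithinAt)
      (fun y hy => by simpa using hα_lip y hy) h0b hx
    simpa [Real.norm_eq_abs, abs_of_nonneg hx.1] using h
  have key : ∀ t ∈ Ioo (0:ℝ) b, |g t - 1| ≤ Real.exp (L * t * (|Real.log t| + 1)) - 1 := by
    rintro t ⟨ht0, htb⟩
    set c := L * t * (|Real.log t| + 1) with hc
    set E : ℝ → ℝ := fun z => (t*z) ^ (a - α (t*z)) with hE
    set φ : ℝ → ℝ := fun z => (1-z)^(a-1) * z^(-a) with hφ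
    have hcpos : 0 ≤ c := by
      rw [hc]; positivity
    have hEbound : ∀ z ∈ Ioc (0:ℝ) 1, |E z - 1| ≤ Real.exp c - 1 := by
      rintro z ⟨hz0, hz1⟩
      have htz0 : 0 < t * z := mul_pos ht0 hz0
      have htzb : t * z ∈ Icc (0:ℝ) b := ⟨htz0.le, by nlinarith⟩
      have hd : |a - α (t*z)| ≤ L * (t*z) := by
        have := hlip (t*z) htzb; rwa [abs_sub_comm]
      have hlog : |Real.log (t*z)| ≤ |Real.log t| + (- Real.log z) := by
        rw [Real.log_mul ht0.ne' hz0.ne']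
        calc |Real.log t + Real.log z| ≤ |Real.log t| + |Real.log z| := abs_add_le _ _
          _ = |Real.log t| + (-Real.log z) := by
              rw [abs_of_nonpos (Real.log_nonpos hz0.le hz1)]
      have hzlog : z * (- Real.log z) ≤ 1 := by
        have h1 : - Real.log z = Real.log z⁻¹ := (Real.log_inv z).symm
        have h2 : Real.log z⁻¹ ≤ z⁻¹ - 1 := Real.log_le_sub_one_of_pos (inv_pos.mpr hz0)
        have h3 : z * z⁻¹ = 1 := mul_inv_cancel₀ hz0.ne'
        nlinarith
      have hlt : (0:ℝ) ≤ |Real.log t| := abs_nonneg _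
      have hlz : (0:ℝ) ≤ -Real.log z := neg_nonneg.mpr (Real.log_nonpos hz0.le hz1)
      have hprod : |(a - α (t*z)) * Real.log (t*z)| ≤ c := by
        rw [abs_mul, hc]
        have h1 : |a - α (t*z)| * |Real.log (t*z)| ≤ (L * (t*z)) * (|Real.log t| + (-Real.log z)) :=
          mul_le_mul hd hlog (abs_nonneg _) (by positivity)
        nlinarith [mul_le_mul_of_nonneg_left hzlog (mul_nonneg hL ht0.le),
                   mul_le_mul_of_nonneg_right hz1 (mul_nonneg (mul_nonneg hL ht0.le) hlt)]
      have hEeq : E z = Real.exp ((a - α (t*z)) * Real.log (t*z)) := by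
        simp only [hE]; rw [Real.rpow_def_of_pos htz0, mul_comm]
      rw [hEeq]
      calc |Real.exp ((a - α (t*z)) * Real.log (t*z)) - 1|
          ≤ Real.exp |(a - α (t*z)) * Real.log (t*z)| - 1 := abs_exp_sub_one_le' _
        _ ≤ Real.exp c - 1 := by have := Real.exp_le_exp.mpr hprod; linarith
    have hφ0 : ∀ z ∈ Icc (0:ℝ) 1, 0 ≤ φ z := by
      intro z hz
      exact mul_nonneg (Real.rpow_nonneg (by linarith [hz.2]) _) (Real.rpow_nonneg hz.1 _)
    have hφint : IntervalIntegrable φ volume 0 1 := beta_integrable ha0 ha1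
    have hφval : ∫ z in (0:ℝ)..1, φ z = κ := beta_value ha0 ha1
    have hmeas : AEStronglyMeasurable (fun z => φ z * E z) (volume.restrict (Set.uIoc (0:ℝ) 1)) := by
      rw [uIoc_of_le (by norm_num : (0:ℝ) ≤ 1),
        ← Measure.restrict_congr_set Ioo_ae_eq_Ioc]
      apply ContinuousOn.aestronglyMeasurable _ measurableSet_Ioo
      apply ContinuousOn.mul
      · apply ContinuousOn.mul
        · apply ContinuousOn.rpow_const (by fun_prop)
          rintro x ⟨hx0, hx1⟩; left; intro h; nlinarith
        · apply ContinuousOn.rpow_const (by fun_prop)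
          rintro x ⟨hx0, hx1⟩; left; exact hx0.ne'
      · apply ContinuousOn.rpow (by fun_prop)
        · apply ContinuousOn.sub continuousOn_const
          apply hαc.comp (by fun_prop)
          rintro x ⟨hx0, hx1⟩
          constructor
          · positivity
          · nlinarith
        · rintro x ⟨hx0, hx1⟩; left; exact (mul_pos ht0 hx0).ne'
    have hbound : ∀ z ∈ Ioc (0:ℝ) 1, |φ z * E z - φ z| ≤ (Real.exp c - 1) * φ z := by
      intro z hz
      have h1 := hEbound z hz
      have h2 := hφ0 z (Ioc_subset_Icc_self hz)
      have he : φ z * E z - φ z = φ z * (E z - 1) := by ring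
      rw [he, abs_mul, abs_of_nonneg h2]
      nlinarith [abs_nonneg (E z - 1)]
    have hφE_int : IntervalIntegrable (fun z => φ z * E z) volume 0 1 := by
      apply (hφint.const_mul (Real.exp c)).mono_fun' hmeas
      rw [uIoc_of_le (by norm_num : (0:ℝ) ≤ 1)]
      filter_upwards [ae_restrict_mem measurableSet_Ioc] with z hz
      have h1 := hEbound z hz
      have h2 := hφ0 z (Ioc_subset_Icc_self hz)
      have h3 : |E z| ≤ Real.exp c := by
        calc |E z| = |(E z - 1) + 1| := by ring_nf
          _ ≤ |E z - 1| + 1 := by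
              have := abs_add_le (E z - 1) 1
              simpa using this
          _ ≤ Real.exp c := by linarith
      rw [Real.norm_eq_abs, abs_mul, abs_of_nonneg h2]
      nlinarith [abs_nonneg (E z)]
    have hineq : |(∫ z in (0:ℝ)..1, φ z * E z) - κ| ≤ (Real.exp c - 1) * κ := by
      have hsub : (∫ z in (0:ℝ)..1, (φ z * E z - φ z)) = (∫ z in (0:ℝ)..1, φ z * E z) - κ := by
        rw [intervalIntegral.integral_sub hφE_int hφint, hφval]
      rw [← hsub]
      have hle : ‖∫ z in (0:ℝ)..1, (φ z * E z - φ z)‖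
          ≤ |∫ z in (0:ℝ)..1, (Real.exp c - 1) * φ z| := by
        apply intervalIntegral.norm_integral_le_abs_of_norm_le _ (hφint.const_mul _)
        rw [uIoc_of_le (by norm_num : (0:ℝ) ≤ 1)]
        filter_upwards [ae_restrict_mem measurableSet_Ioc] with z hz
        rw [Real.norm_eq_abs]
        exact hbound z hz
      rw [Real.norm_eq_abs] at hle
      have hval : (∫ z in (0:ℝ)..1, (Real.exp c - 1) * φ z) = (Real.exp c - 1) * κ := by
        rw [intervalIntegral.integral_const_mul, hφval]
      rw [hval] at hle
      calc |(∫ z in (0:ℝ)..1, φ z * E z - φ z)| ≤ |(Real.exp c - 1) * κ| := hle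
        _ = (Real.exp c - 1) * κ := by
            rw [abs_of_nonneg]
            have h7 : (1:ℝ) ≤ Real.exp c := Real.one_le_exp hcpos
            nlinarith
    have hsubst : (∫ s in (0:ℝ)..t, (t - s)^(a-1) * s^(-(α s))) = ∫ z in (0:ℝ)..1, φ z * E z := by
      have h1 := intervalIntegral.smul_integral_comp_mul_left
        (f := fun s => (t - s)^(a-1) * s^(-(α s))) (a := 0) (b := 1) t
      rw [mul_zero, mul_one] at h1
      rw [← h1, smul_eq_mul, ← intervalIntegral.integral_const_mul]
      apply intervalIntegral.integral_congr
      intro z hz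
      rw [uIcc_of_le (by norm_num : (0:ℝ) ≤ 1)] at hz
      have := point_eq ha0 ha1 α haa.symm ht0 z hz
      simpa [hφ, hE, mul_assoc] using this
    rw [hg t, hsubst]
    have e1 : 1 / κ * (∫ z in (0:ℝ)..1, φ z * E z) - 1
        = (1/κ) * ((∫ z in (0:ℝ)..1, φ z * E z) - κ) := by
      field_simp
    rw [e1, abs_mul, abs_of_pos (by positivity : (0:ℝ) < 1/κ)]
    calc 1/κ * |(∫ z in (0:ℝ)..1, φ z * E z) - κ| ≤ 1/κ * ((Real.exp c - 1) * κ) := by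
          exact mul_le_mul_of_nonneg_left hineq (by positivity)
      _ = Real.exp c - 1 := by field_simp
  -- limit of the bound
  have hc0 : Tendsto (fun t : ℝ => L * t * (|Real.log t| + 1)) (𝓝[>] (0:ℝ)) (𝓝 0) := by
    have h1 : Tendsto (fun x : ℝ => Real.log x * x ^ (1:ℝ)) (𝓝[>] (0:ℝ)) (𝓝 0) :=
      tendsto_log_mul_rpow_nhdsGT_zero one_pos
    have h2 : Tendsto (fun x : ℝ => |Real.log x * x ^ (1:ℝ)|) (𝓝[>] (0:ℝ)) (𝓝 0) := by
      simpa using h1.abs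
    have h3 : Tendsto (fun x : ℝ => x * |Real.log x|) (𝓝[>] (0:ℝ)) (𝓝 0) := by
      apply h2.congr'
      filter_upwards [self_mem_nhdsWithin] with x hx
      rw [Real.rpow_one, abs_mul, abs_of_pos (show (0:ℝ) < x from hx)]
      ring
    have h4 : Tendsto (fun x : ℝ => x) (𝓝[>] (0:ℝ)) (𝓝 0) :=
      tendsto_id.mono_left nhdsWithin_le_nhds
    have h5 := (h3.add h4).const_mul L
    rw [add_zero, mul_zero] at h5
    apply h5.congr
    intro x; ring
  have hexp : Tendsto (fun t : ℝ => Real.exp (L * t * (|Real.log t| + 1)) - 1)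
      (𝓝[>] (0:ℝ)) (𝓝 0) := by
    have h6 := ((Real.continuous_exp.tendsto 0).comp hc0).sub_const 1
    simpa using h6
  rw [tendsto_iff_dist_tendsto_zero]
  apply squeeze_zero' (Eventually.of_forall (fun t => dist_nonneg)) _ hexp
  filter_upwards [Ioo_mem_nhdsGT_of_mem ⟨le_refl 0, hb⟩] with t ht
  rw [Real.dist_eq]
  exact key t ht
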